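/- For every m ≥ 4, the global defensive alliance number of P₂ ∘ Cₘ equals 2⌊m/2⌋. -/

import Mathlib

/-- Lexicographic product of simple graphs. -/
def lexProd {α β : Type*} (G : SimpleGraph α) (H : SimpleGraph β) :
    SimpleGraph (α × β) where
  Adj x y := G.Adj x.1 y.1 ∨ (x.1 = y.1 ∧ H.Adj x.2 y.2)
  symm := by
    constructor
    rintro x y (h | ⟨h1, h2⟩)
    · exact Or.inl h.symm
    · exact Or.inr ⟨h1.symm, h2.symm⟩
  loopless := by
    constructor
    rintro x (h | ⟨_, h2⟩)
    · exact G.irrefl h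
    · exact H.irrefl h2

/-- Closed neighborhood N[v]. -/
def closedNbhd {α : Type*} (G : SimpleGraph α) (v : α) : Set α :=
  insert v (G.neighborSet v)

/-- A defensive alliance: every vertex of S is defended. -/
def IsDefensiveAlliance {α : Type*} (G : SimpleGraph α) (S : Set α) : Prop :=
  ∀ v ∈ S, ((closedNbhd G v) \ S).ncard ≤ ((closedNbhd G v) ∩ S).ncard

/-- A global defensive alliance: a defensive alliance which is also dominating. -/
def IsGDA {α : Type*} (G : SimpleGraph α) (S : Set α) : Prop :=
  IsDefensiveAlliance G S ∧ ∀ v, v ∈ S ∨ ∃ u ∈ S, G.Adj v u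

/-- The global defensive alliance number. -/
noncomputable def gdaNumber {α : Type*} (G : SimpleGraph α) : ℕ :=
  sInf {k | ∃ S : Set α, IsGDA G S ∧ S.ncard = k}

/-- Number of vertices of S in the j-th copy of G² (copies indexed 1,…,n). -/
noncomputable def copyCount {n m : ℕ} (S : Set (Fin n × Fin m)) (j : ℕ) : ℕ :=
  (S ∩ {p | (p.1 : ℕ) + 1 = j}).ncard


namespace Stmt4
open SimpleGraph

abbrev V (k : ℕ) := Fin 2 × Fin (k+4)

def G (k : ℕ) : SimpleGraph (V k) := lexProd (SimpleGraph.pathGraph 2) (SimpleGraph.cycleGraph (k+4))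

lemma other_ne (i : Fin 2) : 1 - i ≠ i := by revert i; decide
lemma ne_iff {a i : Fin 2} : a ≠ i ↔ a = 1 - i := by revert a i; decide
lemma other_other (i : Fin 2) : 1 - (1 - i) = i := by revert i; decide

lemma cyc_adj {k : ℕ} {j b : Fin (k+4)} :
    (SimpleGraph.cycleGraph (k+4)).Adj j b ↔ b = j - 1 ∨ b = j + 1 := by
  have : (SimpleGraph.cycleGraph (k+4)).neighborSet j = {j - 1, j + 1} :=
    SimpleGraph.cycleGraph_neighborSet (n := k+2)
  have hb : b ∈ (SimpleGraph.cycleGraph (k+4)).neighborSet j ↔ b ∈ ({j-1, j+1} : Set _) := by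
    rw [this]
  simpa [SimpleGraph.mem_neighborSet] using hb

lemma closedNbhd_eq {k : ℕ} (i : Fin 2) (j : Fin (k+4)) :
    closedNbhd (G k) (i, j) =
      {p : V k | p.1 = 1 - i} ∪ {(i, j-1), (i, j), (i, j+1)} := by
  ext ⟨a, b⟩
  simp only [closedNbhd, Set.mem_insert_iff, SimpleGraph.mem_neighborSet, G, lexProd,
    Set.mem_union, Set.mem_setOf_eq, Prod.mk.injEq, Set.mem_singleton_iff]
  rw [show (pathGraph 2).Adj i a ↔ i ≠ a by rw [pathGraph_two_eq_top]; simp [eq_comm], cyc_adj]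
  constructor
  · rintro (⟨rfl, rfl⟩ | (h | ⟨rfl, (rfl | rfl)⟩))
    · tauto
    · exact Or.inl (ne_iff.mp h.symm)
    · tauto
    · tauto
  · rintro (h | h)
    · exact Or.inr (Or.inl (ne_iff.mpr h).symm)
    · tauto

noncomputable def cnt {k : ℕ} (S : Set (V k)) (i : Fin 2) : ℕ := {j : Fin (k+4) | (i, j) ∈ S}.ncard

lemma ncard_P {k : ℕ} (i : Fin 2) (T : Set (Fin (k+4))) :
    {p : V k | p.1 = i ∧ p.2 ∈ T}.ncard = T.ncard := by
  rw [show {p : V k | p.1 = i ∧ p.2 ∈ T} = Prod.mk i '' T from by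
    ext ⟨a, b⟩
    simp only [Set.mem_setOf_eq, Set.mem_image]
    exact ⟨fun ⟨h1, h2⟩ => ⟨b, h2, by rw [h1]⟩,
      fun ⟨x, h2, hx⟩ => by cases hx; exact ⟨rfl, h2⟩⟩]
  exact Set.ncard_image_of_injective _ (fun x y h => congrArg Prod.snd h)

lemma ncard_split {k : ℕ} (S : Set (V k)) : S.ncard = cnt S 0 + cnt S 1 := by
  have h2 : ∀ a : Fin 2, a = 0 ∨ a = 1 := by decide
  have hS : S = {p : V k | p.1 = 0 ∧ p.2 ∈ {j | (0, j) ∈ S}} ∪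
      {p : V k | p.1 = 1 ∧ p.2 ∈ {j | (1, j) ∈ S}} := by
    ext ⟨a, b⟩
    simp only [Set.mem_union, Set.mem_setOf_eq]
    rcases h2 a with rfl | rfl <;> simp
  have hd : Disjoint {p : V k | p.1 = 0 ∧ p.2 ∈ {j | (0, j) ∈ S}}
      {p : V k | p.1 = 1 ∧ p.2 ∈ {j | (1, j) ∈ S}} := by
    rw [Set.disjoint_left]
    rintro ⟨a, b⟩ ⟨h0, -⟩ ⟨h1, -⟩
    simp only at h0 h1
    rw [h0] at h1; exact absurd h1 (by decide)
  conv_lhs => rw [hS]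
  rw [Set.ncard_union_eq hd, ncard_P, ncard_P]; rfl

open Fin.NatCast in
lemma closure {k : ℕ} {T : Set (Fin (k+4))} (hne : T.Nonempty)
    (hcl : ∀ j ∈ T, j + 1 ∈ T) : T = Set.univ := by
  obtain ⟨j0, hj0⟩ := hne
  have key : ∀ n : ℕ, j0 + (n : Fin (k+4)) ∈ T := by
    intro n
    induction n with
    | zero => simpa using hj0
    | succ n ih =>
        have h := hcl _ ih
        have e : ((n + 1 : ℕ) : Fin (k+4)) = (n : Fin (k+4)) + 1 := by push_cast; ring
        rw [e, ← add_assoc]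
        exact h
  ext t
  simp only [Set.mem_univ, iff_true]
  have h := key ((t - j0).val)
  have e : j0 + (((t - j0).val : ℕ) : Fin (k+4)) = t := by
    rw [Fin.cast_val_eq_self]; abel
  rwa [e] at h

lemma card_fin {k : ℕ} : Nat.card (Fin (k+4)) = k + 4 := by simp

lemma defense_bounds {k : ℕ} {S : Set (V k)} (hd : IsDefensiveAlliance (G k) S)
    {i : Fin 2} {j : Fin (k+4)} (hv : (i, j) ∈ S) :
    k + 4 ≤ 2 * cnt S (1-i) + 3 ∧
    ((i, j+1) ∉ S → k + 4 ≤ 2 * cnt S (1-i) + 1) ∧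
    ((i, j-1) ∉ S → k + 4 ≤ 2 * cnt S (1-i) + 1) := by
  have hdef := hd (i, j) hv
  set T : Set (Fin (k+4)) := {j' | (1-i, j') ∈ S} with hT
  have hTc : T.ncard + Tᶜ.ncard = k + 4 := by
    rw [Set.ncard_add_ncard_compl, card_fin]
  -- the "other copy minus S" part is inside N \ S
  have hsup : {p : V k | p.1 = 1 - i ∧ p.2 ∈ Tᶜ} ⊆ closedNbhd (G k) (i, j) \ S := by
    rintro ⟨a, b⟩ ⟨ha, hb⟩
    refine ⟨?_, ?_⟩
    · rw [closedNbhd_eq]; exact Or.inl ha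
    · simp only at ha; rw [ha]; exact hb
  have hcP : {p : V k | p.1 = 1 - i ∧ p.2 ∈ Tᶜ}.ncard = Tᶜ.ncard := ncard_P _ _
  have hP : {p : V k | p.1 = 1 - i ∧ p.2 ∈ T}.ncard = T.ncard := ncard_P _ _
  -- N ∩ S inside triple ∪ other-copy-S
  have hcnt : cnt S (1-i) = T.ncard := rfl
  have hNsub : ∀ q : V k, q ∈ closedNbhd (G k) (i, j) ∩ S →
      q = (i, j-1) ∨ q = (i, j) ∨ q = (i, j+1) ∨ (q.1 = 1 - i ∧ q.2 ∈ T) := by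
    rintro ⟨a, b⟩ ⟨hN, hS⟩
    rw [closedNbhd_eq] at hN
    rcases hN with ha | h
    · simp only [Set.mem_setOf_eq] at ha
      refine Or.inr (Or.inr (Or.inr ⟨ha, ?_⟩))
      rw [hT]; simp only [Set.mem_setOf_eq]; rw [← ha]; exact hS
    · have h' : a = i ∧ b = j - 1 ∨ a = i ∧ b = j ∨ a = i ∧ b = j + 1 := by simpa using h
      rcases h' with ⟨rfl, rfl⟩ | ⟨rfl, rfl⟩ | ⟨rfl, rfl⟩ <;> simp
  have hub : (closedNbhd (G k) (i, j) ∩ S).ncard ≤ 3 + T.ncard := by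
    have hsub2 : closedNbhd (G k) (i, j) ∩ S ⊆
        insert ((i, j-1) : V k) (insert (i, j) (insert (i, j+1)
          {p : V k | p.1 = 1 - i ∧ p.2 ∈ T})) := by
      intro q hq
      rcases hNsub q hq with h | h | h | h <;> simp [h]
    calc (closedNbhd (G k) (i, j) ∩ S).ncard ≤ _ := Set.ncard_le_ncard hsub2 (Set.toFinite _)
      _ ≤ 3 + T.ncard := by
        refine le_trans (Set.ncard_insert_le _ _) ?_
        refine le_trans (Nat.add_le_add_right (Set.ncard_insert_le _ _) 1) ?_
        refine le_trans (Nat.add_le_add_right (Nat.add_le_add_right (Set.ncard_insert_le _ _) 1) 1) ?_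
        rw [hP]; omega
  have hlb : Tᶜ.ncard ≤ (closedNbhd (G k) (i, j) \ S).ncard := by
    rw [← hcP]; exact Set.ncard_le_ncard hsup (Set.toFinite _)
  refine ⟨by omega, ?_, ?_⟩
  · intro hout
    have hlb' : Tᶜ.ncard + 1 ≤ (closedNbhd (G k) (i, j) \ S).ncard := by
      have hmem : ((i, j+1) : V k) ∉ {p : V k | p.1 = 1 - i ∧ p.2 ∈ Tᶜ} := by
        rintro ⟨ha, -⟩; exact other_ne i ha.symm
      have : insert ((i, j+1) : V k) {p : V k | p.1 = 1 - i ∧ p.2 ∈ Tᶜ} ⊆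
          closedNbhd (G k) (i, j) \ S := by
        rintro q hq
        rcases hq with rfl | hq
        · exact ⟨by rw [closedNbhd_eq]; simp, hout⟩
        · exact hsup hq
      calc Tᶜ.ncard + 1 = _ := by rw [← hcP, ← Set.ncard_insert_of_notMem hmem]
        _ ≤ _ := Set.ncard_le_ncard this (Set.toFinite _)
    have hub' : (closedNbhd (G k) (i, j) ∩ S).ncard ≤ 2 + T.ncard := by
      have hsub2 : closedNbhd (G k) (i, j) ∩ S ⊆
          insert ((i, j-1) : V k) (insert (i, j)
            {p : V k | p.1 = 1 - i ∧ p.2 ∈ T}) := by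
        intro q hq
        rcases hNsub q hq with h | h | h | h
        · simp [h]
        · simp [h]
        · exact absurd (h ▸ hq.2) hout
        · simp [h]
      calc (closedNbhd (G k) (i, j) ∩ S).ncard ≤ _ := Set.ncard_le_ncard hsub2 (Set.toFinite _)
        _ ≤ 2 + T.ncard := by
          refine le_trans (Set.ncard_insert_le _ _) ?_
          refine le_trans (Nat.add_le_add_right (Set.ncard_insert_le _ _) 1) ?_
          rw [hP]; omega
    omega
  · intro hout
    have hlb' : Tᶜ.ncard + 1 ≤ (closedNbhd (G k) (i, j) \ S).ncard := by
      have hmem : ((i, j-1) : V k) ∉ {p : V k | p.1 = 1 - i ∧ p.2 ∈ Tᶜ} := by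
        rintro ⟨ha, -⟩; exact other_ne i ha.symm
      have : insert ((i, j-1) : V k) {p : V k | p.1 = 1 - i ∧ p.2 ∈ Tᶜ} ⊆
          closedNbhd (G k) (i, j) \ S := by
        rintro q hq
        rcases hq with rfl | hq
        · exact ⟨by rw [closedNbhd_eq]; simp, hout⟩
        · exact hsup hq
      calc Tᶜ.ncard + 1 = _ := by rw [← hcP, ← Set.ncard_insert_of_notMem hmem]
        _ ≤ _ := Set.ncard_le_ncard this (Set.toFinite _)
    have hub' : (closedNbhd (G k) (i, j) ∩ S).ncard ≤ 2 + T.ncard := by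
      have hsub2 : closedNbhd (G k) (i, j) ∩ S ⊆
          insert ((i, j) : V k) (insert (i, j+1)
            {p : V k | p.1 = 1 - i ∧ p.2 ∈ T}) := by
        intro q hq
        rcases hNsub q hq with h | h | h | h
        · exact absurd (h ▸ hq.2) hout
        · simp [h]
        · simp [h]
        · simp [h]
      calc (closedNbhd (G k) (i, j) ∩ S).ncard ≤ _ := Set.ncard_le_ncard hsub2 (Set.toFinite _)
        _ ≤ 2 + T.ncard := by
          refine le_trans (Set.ncard_insert_le _ _) ?_
          refine le_trans (Nat.add_le_add_right (Set.ncard_insert_le _ _) 1) ?_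
          rw [hP]; omega
    omega

lemma lower {k : ℕ} {S : Set (V k)} (hS : IsGDA (G k) S) : 2 * ((k+4)/2) ≤ S.ncard := by
  obtain ⟨hd, hdom⟩ := hS
  have hsne : ∃ p : V k, p ∈ S := by
    rcases hdom (0, 0) with h | ⟨u, hu, -⟩
    · exact ⟨_, h⟩
    · exact ⟨u, hu⟩
  obtain ⟨⟨i0, j0⟩, hp⟩ := hsne
  have nonempty_of_cnt : ∀ i : Fin 2, 1 ≤ cnt S i → {j | (i, j) ∈ S}.Nonempty := by
    intro i h
    rw [← Set.ncard_pos (Set.toFinite _)]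
    exact h
  have step : ∀ i : Fin 2, ∀ j : Fin (k+4), (i, j) ∈ S → 1 ≤ cnt S (1 - i) := by
    intro i j hj
    have := (defense_bounds hd hj).1
    omega
  have h1 : 1 ≤ cnt S (1 - i0) := step _ _ hp
  obtain ⟨j1, hj1⟩ := nonempty_of_cnt _ h1
  have h2 : 1 ≤ cnt S i0 := by
    have := step _ _ hj1
    rwa [other_other] at this
  have hboth : ∀ i : Fin 2, 1 ≤ cnt S i := by
    intro i
    rcases (by decide : ∀ a b : Fin 2, a = b ∨ a = 1 - b) i i0 with h | h
    · rwa [h]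
    · rwa [h]
  have force : ∀ i : Fin 2, 2 * cnt S i + 1 < k + 4 → cnt S (1 - i) = k + 4 := by
    intro i hlt
    have hne : {j | (1 - i, j) ∈ S}.Nonempty := nonempty_of_cnt _ (hboth _)
    have hcl : ∀ j ∈ {j | (1 - i, j) ∈ S}, j + 1 ∈ {j | (1 - i, j) ∈ S} := by
      intro j hj
      by_contra hout
      have := (defense_bounds hd hj).2.1 hout
      rw [other_other] at this
      omega
    have huniv := closure hne hcl
    rw [cnt, huniv, Set.ncard_univ, card_fin]
  rw [ncard_split]
  by_cases h0 : (k+4)/2 ≤ cnt S 0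
  · by_cases hone : (k+4)/2 ≤ cnt S 1
    · omega
    · have := force 1 (by omega)
      rw [(by decide : (1 : Fin 2) - 1 = 0)] at this
      omega
  · have := force 0 (by omega)
    rw [(by decide : (1 : Fin 2) - 0 = 1)] at this
    omega

def S0 (k : ℕ) : Set (V k) := {p | (p.2 : ℕ) < (k+4)/2}

lemma ncard_T {k : ℕ} : {j : Fin (k+4) | (j : ℕ) < (k+4)/2}.ncard = (k+4)/2 := by
  have h : (k+4)/2 ≤ k+4 := by omega
  have he : {j : Fin (k+4) | (j : ℕ) < (k+4)/2} = Fin.castLE h '' Set.univ := by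
    ext b
    simp only [Set.mem_setOf_eq, Set.image_univ, Set.mem_range]
    constructor
    · intro hb; exact ⟨⟨(b : ℕ), hb⟩, Fin.ext rfl⟩
    · rintro ⟨a, rfl⟩; exact a.isLt
  rw [he, Set.image_univ, ← Set.image_univ,
    Set.ncard_image_of_injective _ (Fin.castLE_injective h), Set.ncard_univ]
  simp

lemma ncard_Tc {k : ℕ} : ({j : Fin (k+4) | (j : ℕ) < (k+4)/2}ᶜ).ncard = (k+4) - (k+4)/2 := by
  have := Set.ncard_add_ncard_compl {j : Fin (k+4) | (j : ℕ) < (k+4)/2}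
  rw [ncard_T, card_fin] at this
  omega

lemma S0_ncard {k : ℕ} : (S0 k).ncard = 2 * ((k+4)/2) := by
  rw [ncard_split]
  have h0 : cnt (S0 k) 0 = (k+4)/2 := ncard_T
  have h1 : cnt (S0 k) 1 = (k+4)/2 := ncard_T
  omega

lemma S0_def_at {k : ℕ} (i : Fin 2) (j nb onb : Fin (k+4))
    (hj : (j : ℕ) < (k+4)/2) (hnb : (nb : ℕ) < (k+4)/2) (hne : nb ≠ j)
    (hnbmem : nb = j - 1 ∨ nb = j + 1)
    (hpair : ({j-1, j+1} : Set (Fin (k+4))) ⊆ {nb, onb}) :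
    (closedNbhd (G k) (i, j) \ S0 k).ncard ≤ (closedNbhd (G k) (i, j) ∩ S0 k).ncard := by
  set f := (k+4)/2 with hf
  set T : Set (Fin (k+4)) := {j' | (j' : ℕ) < f} with hT
  set P : Set (V k) := {p | p.1 = 1 - i ∧ p.2 ∈ T} with hP
  set Pc : Set (V k) := {p | p.1 = 1 - i ∧ p.2 ∈ Tᶜ} with hPc
  have hA1 : insert ((i, j) : V k) (insert (i, nb) P) ⊆ closedNbhd (G k) (i, j) ∩ S0 k := by
    rintro q hq
    rcases hq with rfl | rfl | hq
    · exact ⟨by rw [closedNbhd_eq]; simp, hj⟩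
    · refine ⟨by rw [closedNbhd_eq]; rcases hnbmem with rfl | rfl <;> simp, hnb⟩
    · obtain ⟨ha, hb⟩ := hq
      exact ⟨by rw [closedNbhd_eq]; exact Or.inl ha, hb⟩
  have hA2 : (insert ((i, j) : V k) (insert (i, nb) P)).ncard = 2 + f := by
    have hm1 : ((i, nb) : V k) ∉ P := by rintro ⟨ha, -⟩; exact other_ne i ha.symm
    have hm2 : ((i, j) : V k) ∉ insert ((i, nb) : V k) P := by
      rintro (he | ⟨ha, -⟩)
      · exact hne (congrArg Prod.snd he).symm
      · exact other_ne i ha.symm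
    rw [Set.ncard_insert_of_notMem hm2, Set.ncard_insert_of_notMem hm1,
      hP, ncard_P, hT, ncard_T]
    omega
  have hB1 : closedNbhd (G k) (i, j) \ S0 k ⊆ insert ((i, onb) : V k) Pc := by
    rintro ⟨a, b⟩ ⟨hN, hS⟩
    rw [closedNbhd_eq] at hN
    have hbS : ¬ (b : ℕ) < f := hS
    rcases hN with ha | h
    · exact Or.inr ⟨ha, hbS⟩
    · have h' : a = i ∧ b = j - 1 ∨ a = i ∧ b = j ∨ a = i ∧ b = j + 1 := by simpa using h
      rcases h' with ⟨rfl, rfl⟩ | ⟨rfl, rfl⟩ | ⟨rfl, rfl⟩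
      · rcases hpair (by simp : (j - 1 : Fin (k+4)) ∈ ({j-1, j+1} : Set _)) with h2 | h2
        · exact absurd (h2 ▸ hnb) hbS
        · rw [h2]; exact Or.inl rfl
      · exact absurd hj hbS
      · rcases hpair (by simp : (j + 1 : Fin (k+4)) ∈ ({j-1, j+1} : Set _)) with h2 | h2
        · exact absurd (h2 ▸ hnb) hbS
        · rw [h2]; exact Or.inl rfl
  have hB2 : (insert ((i, onb) : V k) Pc).ncard ≤ 1 + ((k+4) - f) := by
    refine le_trans (Set.ncard_insert_le _ _) ?_
    rw [hPc, ncard_P, hT, ncard_Tc]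
    omega
  calc (closedNbhd (G k) (i, j) \ S0 k).ncard
      ≤ (insert ((i, onb) : V k) Pc).ncard := Set.ncard_le_ncard hB1 (Set.toFinite _)
    _ ≤ 1 + ((k+4) - f) := hB2
    _ ≤ 2 + f := by omega
    _ = (insert ((i, j) : V k) (insert (i, nb) P)).ncard := hA2.symm
    _ ≤ (closedNbhd (G k) (i, j) ∩ S0 k).ncard := Set.ncard_le_ncard hA1 (Set.toFinite _)

lemma S0_isGDA {k : ℕ} : IsGDA (G k) (S0 k) := by
  constructor
  · rintro ⟨i, j⟩ hv
    have hj : (j : ℕ) < (k+4)/2 := hv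
    by_cases hc : (j : ℕ) + 1 < (k+4)/2
    · have hval : ((j + 1 : Fin (k+4)) : ℕ) = (j : ℕ) + 1 := by
        rw [Fin.val_add_one, if_neg]
        intro hlast
        rw [hlast] at hj
        simp [Fin.last] at hj
        omega
      refine S0_def_at i j (j+1) (j-1) hj (by omega) ?_ (Or.inr rfl) ?_
      · intro heq; have := congrArg Fin.val heq; omega
      · intro x hx; simp only [Set.mem_insert_iff, Set.mem_singleton_iff] at hx ⊢; tauto
    · have hj0 : (j : ℕ) ≠ 0 := by
        have : 2 ≤ (k+4)/2 := by omega
        omega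
      have hne0 : j ≠ 0 := by
        intro h; rw [h] at hj0; simp at hj0
      have hval : ((j - 1 : Fin (k+4)) : ℕ) = (j : ℕ) - 1 := by
        rw [Fin.coe_sub_one, if_neg hne0]
      refine S0_def_at i j (j-1) (j+1) hj (by omega) ?_ (Or.inl rfl) ?_
      · intro heq; have := congrArg Fin.val heq; omega
      · intro x hx; simp only [Set.mem_insert_iff, Set.mem_singleton_iff] at hx ⊢; tauto
  · rintro ⟨i, j⟩
    by_cases h : (j : ℕ) < (k+4)/2
    · exact Or.inl h
    · refine Or.inr ⟨(1 - i, ⟨0, by omega⟩), ?_, ?_⟩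
      · show (0 : ℕ) < (k+4)/2; omega
      · refine Or.inl ?_
        rw [SimpleGraph.pathGraph_two_eq_top]
        exact (other_ne i).symm

end Stmt4

theorem stmt_4 (m : ℕ) (hm : 4 ≤ m) :
    gdaNumber (lexProd (SimpleGraph.pathGraph 2) (SimpleGraph.cycleGraph m)) = 2 * (m / 2) := by
  obtain ⟨k, rfl⟩ : ∃ k, m = k + 4 := ⟨m - 4, by omega⟩
  show gdaNumber (Stmt4.G k) = 2 * ((k+4) / 2)
  have hmem : 2 * ((k+4)/2) ∈ {n | ∃ S : Set (Stmt4.V k), IsGDA (Stmt4.G k) S ∧ S.ncard = n} :=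
    ⟨Stmt4.S0 k, Stmt4.S0_isGDA, Stmt4.S0_ncard⟩
  refine le_antisymm (Nat.sInf_le hmem) ?_
  refine le_csInf ⟨_, hmem⟩ ?_
  rintro b ⟨S, hS, rfl⟩
  exact Stmt4.lower hS
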